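/- (Laplacian of the coordinate functions of the first family S₁) For the surface S₁ : r(t,s) = (t, a(t), s) one has, at every (t,s) ∈ I × ℝ: Δ(r₁) = a′·a″/(1 + a′²)², Δ(r₂) = −a″/(1 + a′²)², and Δ(r₃) = −a″·(t + a·a′)/(2(1 + a′²)²), where r₁(t,s) = t, r₂(t,s) = a(t), r₃(t,s) = s. -/

import Mathlib

noncomputable section

/-- Partial derivative with respect to the first (t) variable. -/
def pdx (f : ℝ × ℝ → ℝ) : ℝ × ℝ → ℝ := fun p => fderiv ℝ f p (1, 0)

/-- Partial derivative with respect to the second (s) variable. -/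
def pdy (f : ℝ × ℝ → ℝ) : ℝ × ℝ → ℝ := fun p => fderiv ℝ f p (0, 1)

/-- First fundamental form coefficient `E = 1 + a′² + ¼(a − t a′)²` of the ruled surface
`S₁ : r(t,s) = (t, a(t), s)` in the Heisenberg group `H₃`. -/
def aE (a : ℝ → ℝ) (t : ℝ) : ℝ := 1 + deriv a t ^ 2 + (a t - t * deriv a t) ^ 2 / 4

/-- First fundamental form coefficient `F = ½(a − t a′)` of `S₁`. -/
def aF (a : ℝ → ℝ) (t : ℝ) : ℝ := (a t - t * deriv a t) / 2

/-- `W = √(EG − F²) = √(1 + a′²)` for `S₁` (here `G = 1`). -/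
def aW (a : ℝ → ℝ) (t : ℝ) : ℝ := Real.sqrt (1 + deriv a t ^ 2)

/-- The Laplace–Beltrami operator of `S₁ : r(t,s) = (t, a(t), s)`, with the sign convention
`Δφ = −(1/W)[∂_t((G φ_t − F φ_s)/W) + ∂_s((−F φ_t + E φ_s)/W)]`, `G = 1`. -/
def lap1 (a : ℝ → ℝ) (φ : ℝ × ℝ → ℝ) : ℝ × ℝ → ℝ := fun p =>
  -(1 / aW a p.1) *
    (pdx (fun q => (1 * pdx φ q - aF a q.1 * pdy φ q) / aW a q.1) p +
     pdy (fun q => (-(aF a q.1) * pdx φ q + aE a q.1 * pdy φ q) / aW a q.1) p)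

lemma pdx_fst_comp (h : ℝ → ℝ) : pdx (fun q : ℝ × ℝ => h q.1) = fun q => deriv h q.1 := by
  funext q
  by_cases hd : DifferentiableAt ℝ h q.1
  · have e : (fun q : ℝ × ℝ => h q.1) = h ∘ Prod.fst := rfl
    rw [pdx, e, fderiv_comp q hd differentiableAt_fst, fderiv_fst]
    rfl
  · have hnd : ¬ DifferentiableAt ℝ (fun q : ℝ × ℝ => h q.1) q := by
      intro hcon
      exact hd (hcon.comp q.1 ((differentiableAt_id).prodMk (differentiableAt_const q.2)) :
        DifferentiableAt ℝ ((fun q : ℝ × ℝ => h q.1) ∘ (fun x : ℝ => (x, q.2))) q.1)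
    simp [pdx, fderiv_zero_of_not_differentiableAt hnd, deriv_zero_of_not_differentiableAt hd]

lemma pdy_fst_comp (h : ℝ → ℝ) : pdy (fun q : ℝ × ℝ => h q.1) = fun _ => 0 := by
  funext q
  by_cases hd : DifferentiableAt ℝ h q.1
  · have e : (fun q : ℝ × ℝ => h q.1) = h ∘ Prod.fst := rfl
    rw [pdy, e, fderiv_comp q hd differentiableAt_fst, fderiv_fst]
    simp
  · have hnd : ¬ DifferentiableAt ℝ (fun q : ℝ × ℝ => h q.1) q := by
      intro hcon
      exact hd (hcon.comp q.1 ((differentiableAt_id).prodMk (differentiableAt_const q.2)) :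
        DifferentiableAt ℝ ((fun q : ℝ × ℝ => h q.1) ∘ (fun x : ℝ => (x, q.2))) q.1)
    simp [pdy, fderiv_zero_of_not_differentiableAt hnd]

lemma pdx_fst_id : pdx (fun q : ℝ × ℝ => q.1) = fun _ => 1 := by
  have := pdx_fst_comp id
  simpa using this

lemma pdy_fst_id : pdy (fun q : ℝ × ℝ => q.1) = fun _ => 0 := pdy_fst_comp id

lemma pdx_snd_id : pdx (fun q : ℝ × ℝ => q.2) = fun _ => 0 := by
  funext q
  rw [pdx, show (fun q : ℝ × ℝ => q.2) = Prod.snd from rfl, fderiv_snd]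
  simp

lemma pdy_snd_id : pdy (fun q : ℝ × ℝ => q.2) = fun _ => 1 := by
  funext q
  rw [pdy, show (fun q : ℝ × ℝ => q.2) = Prod.snd from rfl, fderiv_snd]
  simp


/-- **Laplacian of the coordinate functions of the first family `S₁`**:
for `S₁ : r(t,s) = (t, a(t), s)`, at every `(t,s) ∈ I × ℝ` one has
`Δr₁ = a′a″/(1 + a′²)²`, `Δr₂ = −a″/(1 + a′²)²`, and
`Δr₃ = −a″(t + a·a′)/(2(1 + a′²)²)`. -/
theorem laplacian_coordinates_S1
    (I : Set ℝ) (hI : IsOpen I) (hIne : I.Nonempty) (hIconn : I.OrdConnected)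
    (a : ℝ → ℝ) (ha : ContDiffOn ℝ (⊤ : ℕ∞) a I) :
    ∀ t ∈ I, ∀ s : ℝ,
      lap1 a (fun q => q.1) (t, s) =
          deriv a t * deriv (deriv a) t / (1 + deriv a t ^ 2) ^ 2 ∧
      lap1 a (fun q => a q.1) (t, s) =
          -(deriv (deriv a) t) / (1 + deriv a t ^ 2) ^ 2 ∧
      lap1 a (fun q => q.2) (t, s) =
          -(deriv (deriv a) t) * (t + a t * deriv a t) /
            (2 * (1 + deriv a t ^ 2) ^ 2) := by
  intro t ht s
  have htI : I ∈ nhds t := hI.mem_nhds ht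
  have hA : HasDerivAt a (deriv a t) t :=
    ((ha.contDiffAt htI).differentiableAt (by simp)).hasDerivAt
  have hda : ContDiffOn ℝ (⊤ : ℕ∞) (deriv a) I := ha.deriv_of_isOpen hI (by simp)
  have hA' : HasDerivAt (deriv a) (deriv (deriv a) t) t :=
    ((hda.contDiffAt htI).differentiableAt (by simp)).hasDerivAt
  have hpos : (0:ℝ) < 1 + deriv a t ^ 2 := by positivity
  have hWpos : 0 < aW a t := Real.sqrt_pos.2 hpos
  have hWne : aW a t ≠ 0 := ne_of_gt hWpos
  have hW2 : aW a t ^ 2 = 1 + deriv a t ^ 2 := Real.sq_sqrt hpos.le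
  have hu : HasDerivAt (fun x => 1 + deriv a x ^ 2)
      (2 * deriv a t * deriv (deriv a) t) t := by
    have := (hasDerivAt_const t (1:ℝ)).add (hA'.pow 2)
    have h2 : HasDerivAt (fun x => 1 + deriv a x ^ 2)
        (0 + ((2:ℕ):ℝ) * deriv a t ^ (2 - 1) * deriv (deriv a) t) t := this
    convert h2 using 1
    norm_num
  have hW : HasDerivAt (fun x => aW a x)
      (deriv a t * deriv (deriv a) t / aW a t) t := by
    have h0 := (Real.hasDerivAt_sqrt hpos.ne').comp t hu
    have h1 : HasDerivAt (fun x => Real.sqrt (1 + deriv a x ^ 2))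
        (1 / (2 * Real.sqrt (1 + deriv a t ^ 2)) * (2 * deriv a t * deriv (deriv a) t)) t := h0
    convert h1 using 1
    simp only [aW] at hWne ⊢
    field_simp
    rfl
  refine ⟨?_, ?_, ?_⟩
  · simp only [lap1, pdx_fst_id, pdy_fst_id]
    rw [show (fun q : ℝ × ℝ => (1 * 1 - aF a q.1 * 0) / aW a q.1)
        = (fun q : ℝ × ℝ => 1 / aW a q.1) from funext fun q => by ring_nf,
      pdx_fst_comp (fun x => 1 / aW a x),
      pdy_fst_comp (fun x => (-(aF a x) * 1 + aE a x * 0) / aW a x)]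
    have hd1 : HasDerivAt (fun x => 1 / aW a x)
        ((0 * aW a t - 1 * (deriv a t * deriv (deriv a) t / aW a t)) / aW a t ^ 2) t :=
      (hasDerivAt_const t (1:ℝ)).div hW hWne
    simp only [hd1.deriv]
    rw [show (1 + deriv a t ^ 2) = aW a t ^ 2 from hW2.symm]
    field_simp
    ring_nf
  · simp only [lap1, pdx_fst_comp a, pdy_fst_comp a]
    rw [show (fun q : ℝ × ℝ => (1 * deriv a q.1 - aF a q.1 * 0) / aW a q.1)
        = (fun q : ℝ × ℝ => deriv a q.1 / aW a q.1) from funext fun q => by ring_nf,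
      pdx_fst_comp (fun x => deriv a x / aW a x),
      pdy_fst_comp (fun x => (-(aF a x) * deriv a x + aE a x * 0) / aW a x)]
    have hd2 : HasDerivAt (fun x => deriv a x / aW a x)
        ((deriv (deriv a) t * aW a t -
          deriv a t * (deriv a t * deriv (deriv a) t / aW a t)) / aW a t ^ 2) t :=
      hA'.div hW hWne
    simp only [hd2.deriv]
    rw [show (1 + deriv a t ^ 2) = aW a t ^ 2 from hW2.symm]
    field_simp
    linear_combination (-deriv (deriv a) t) * hW2
  · simp only [lap1, pdx_snd_id, pdy_snd_id]
    have hFd : HasDerivAt (aF a)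
        ((deriv a t - (1 * deriv a t + t * deriv (deriv a) t)) / 2) t := by
      have := ((hA.sub ((hasDerivAt_id t).mul hA')).div_const 2)
      exact this
    rw [show (fun q : ℝ × ℝ => (1 * 0 - aF a q.1 * 1) / aW a q.1)
        = (fun q : ℝ × ℝ => -(aF a q.1) / aW a q.1) from funext fun q => by ring_nf,
      pdx_fst_comp (fun x => -(aF a x) / aW a x),
      pdy_fst_comp (fun x => (-(aF a x) * 0 + aE a x * 1) / aW a x)]
    have hd3 : HasDerivAt (fun x => -(aF a x) / aW a x)
        ((-((deriv a t - (1 * deriv a t + t * deriv (deriv a) t)) / 2) * aW a t -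
          -(aF a t) * (deriv a t * deriv (deriv a) t / aW a t)) / aW a t ^ 2) t :=
      hFd.neg.div hW hWne
    simp only [hd3.deriv]
    rw [aF, show (1 + deriv a t ^ 2) = aW a t ^ 2 from hW2.symm]
    field_simp
    linear_combination (-(t * deriv (deriv a) t)) * hW2
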